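/- Let (S, (A_i)_{i=1}^m, H, P, (R_†)) be a tabular episodic Markov game equipped with an attacker reward function R_{†,h} : S × A → [0,1], let π* be any deterministic product policy, and let π be any Markov product policy. Then for every initial state s₁: V^{π*}_{†,1}(s₁) − V^{π}_{†,1}(s₁) ≤ H · E[ ∑_{h=1}^H ∑_{i=1}^m 1(a_{i,h} ≠ π*_{i,h}(s_h)) ], where the expectation is over trajectories generated under π with transitions P started at s₁. In particular, the attack loss Loss2 with respect to the attacker's reward is at most H times the attack loss Loss1 counting deviations from the target policy. -/

import Mathlib

open Finset

namespace MGAttack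

variable {S : Type} [Fintype S] [DecidableEq S]
variable {m : ℕ} {A : Fin m → Type} [∀ i, Fintype (A i)] [∀ i, DecidableEq (A i)]

/-- `VA P f π n h s`: expected sum of `f` over `n` steps starting from step `h` in
state `s`, when joint actions are drawn from the joint pmf `π` and states evolve
according to `P`.  With `f` a mean-reward function this is the value function. -/
noncomputable def VA (P : ℕ → S → (∀ i, A i) → S → ℝ) (f : ℕ → S → (∀ i, A i) → ℝ)
    (π : ℕ → S → (∀ i, A i) → ℝ) : ℕ → ℕ → S → ℝ
  | 0, _, _ => 0
  | n + 1, h, s => ∑ a, π h s a * (f h s a + ∑ s', P h s a s' * VA P f π n (h + 1) s')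

/-- Value function `V^π_h(s)` for horizon `H` (steps `h, h+1, …, H`). -/
noncomputable def Vf (P : ℕ → S → (∀ i, A i) → S → ℝ) (R : ℕ → S → (∀ i, A i) → ℝ)
    (π : ℕ → S → (∀ i, A i) → ℝ) (H h : ℕ) (s : S) : ℝ :=
  VA P R π (H + 1 - h) h s

/-- Q-function `Q^π_h(s,a)` for horizon `H`. -/
noncomputable def Qf (P : ℕ → S → (∀ i, A i) → S → ℝ) (R : ℕ → S → (∀ i, A i) → ℝ)
    (π : ℕ → S → (∀ i, A i) → ℝ) (H h : ℕ) (s : S) (a : ∀ i, A i) : ℝ :=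
  R h s a + ∑ s', P h s a s' * VA P R π (H - h) (h + 1) s'

/-- Joint pmf of a Markov product policy. -/
noncomputable def jp (π : ∀ i : Fin m, ℕ → S → A i → ℝ) : ℕ → S → (∀ i, A i) → ℝ :=
  fun h s a => ∏ i, π i h s (a i)

/-- Joint action prescribed by a deterministic (product) policy. -/
def tgtJ (τ : ∀ i : Fin m, ℕ → S → A i) (h : ℕ) (s : S) : ∀ i, A i := fun i => τ i h s

/-- A deterministic policy viewed as a (point-mass) stochastic policy. -/
noncomputable def detP (τ : ∀ i : Fin m, ℕ → S → A i) : ∀ i : Fin m, ℕ → S → A i → ℝ :=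
  fun i h s b => if b = τ i h s then 1 else 0

/-- `P` is a transition kernel for the steps `1, …, H`. -/
def IsKernel (H : ℕ) (P : ℕ → S → (∀ i, A i) → S → ℝ) : Prop :=
  ∀ h ∈ Finset.Icc 1 H, ∀ s a, (∀ s', 0 ≤ P h s a s') ∧ ∑ s', P h s a s' = 1

/-- `π` is a Markov product policy for the steps `1, …, H`. -/
def IsPolicy (H : ℕ) (π : ∀ i : Fin m, ℕ → S → A i → ℝ) : Prop :=
  ∀ i : Fin m, ∀ h ∈ Finset.Icc 1 H, ∀ s, (∀ b, 0 ≤ π i h s b) ∧ ∑ b, π i h s b = 1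

/-- `πi` is a Markov policy for the single agent `i`. -/
def IsPolicyI (H : ℕ) {i : Fin m} (πi : ℕ → S → A i → ℝ) : Prop :=
  ∀ h ∈ Finset.Icc 1 H, ∀ s, (∀ b, 0 ≤ πi h s b) ∧ ∑ b, πi h s b = 1

/-- The mean rewards all lie in `[0,1]`. -/
def IsReward (H : ℕ) (R : Fin m → ℕ → S → (∀ i, A i) → ℝ) : Prop :=
  ∀ i, ∀ h ∈ Finset.Icc 1 H, ∀ s a, R i h s a ∈ Set.Icc (0 : ℝ) 1

/-- `d_h(s,a) = m/2 + (1/2) ∑_i 1(a_i = π†_{i,h}(s))` of the `d`-portion attack. -/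
noncomputable def dfun (τ : ∀ i : Fin m, ℕ → S → A i) (h : ℕ) (s : S) (a : ∀ i, A i) : ℝ :=
  (m : ℝ) / 2 + (∑ i, if a i = τ i h s then (1 : ℝ) else 0) / 2

/-- Post-attack mean rewards of the `d`-portion attack (target `τ`, worse policy `τ'`). -/
noncomputable def Rport (R : Fin m → ℕ → S → (∀ i, A i) → ℝ) (τ τ' : ∀ i : Fin m, ℕ → S → A i)
    (i : Fin m) : ℕ → S → (∀ i, A i) → ℝ :=
  fun h s a => (dfun τ h s a / m) * R i h s (tgtJ τ h s)
    + (1 - dfun τ h s a / m) * R i h s (tgtJ τ' h s)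

/-- Post-attack transition probabilities of the `d`-portion attack. -/
noncomputable def Pport (P : ℕ → S → (∀ i, A i) → S → ℝ) (τ τ' : ∀ i : Fin m, ℕ → S → A i) :
    ℕ → S → (∀ i, A i) → S → ℝ :=
  fun h s a s' => (dfun τ h s a / m) * P h s (tgtJ τ h s) s'
    + (1 - dfun τ h s a / m) * P h s (tgtJ τ' h s) s'

/-- `Δ^{†−}_{i,h}(s) = Q^{π†}_{i,h}(s, π†_h(s)) − Q^{π†}_{i,h}(s, π⁻_h(s))` (original game). -/
noncomputable def Δdag (P : ℕ → S → (∀ i, A i) → S → ℝ) (R : Fin m → ℕ → S → (∀ i, A i) → ℝ)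
    (τ τ' : ∀ i : Fin m, ℕ → S → A i) (H : ℕ) (i : Fin m) (h : ℕ) (s : S) : ℝ :=
  Qf P (R i) (jp (detP τ)) H h s (tgtJ τ h s) - Qf P (R i) (jp (detP τ)) H h s (tgtJ τ' h s)

/-- Post-attack mean rewards of the `η`-gap attack; `ΔR i` is the reward spread of agent `i`. -/
noncomputable def Rgap (R : Fin m → ℕ → S → (∀ i, A i) → ℝ) (τ : ∀ i : Fin m, ℕ → S → A i)
    (η : ℝ) (ΔR : Fin m → ℝ) (H : ℕ) (i : Fin m) : ℕ → S → (∀ i, A i) → ℝ :=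
  fun h s a =>
    if a = tgtJ τ h s then R i h s a
    else R i h s (tgtJ τ h s) - (η + ((H - h : ℕ) : ℝ) * ΔR i) * (if a i = τ i h s then 0 else 1)

/-- Post-attack mean rewards of the mixed attack. -/
noncomputable def Rmix (R : Fin m → ℕ → S → (∀ i, A i) → ℝ) (τ : ∀ i : Fin m, ℕ → S → A i)
    (i : Fin m) : ℕ → S → (∀ i, A i) → ℝ :=
  fun h s a => (if a i = τ i h s then (1 : ℝ) else 0) * R i h s (tgtJ τ h s)

/-- Post-attack transition probabilities of the mixed attack. -/
def Pmix (P : ℕ → S → (∀ i, A i) → S → ℝ) (τ : ∀ i : Fin m, ℕ → S → A i) :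
    ℕ → S → (∀ i, A i) → S → ℝ :=
  fun h s a s' => P h s (tgtJ τ h s) s'

/-- Probability of being in state `s'` after `n` steps, starting from `(h, s)` and following
the deterministic policy `τ` under the transitions `P`. -/
noncomputable def reach (P : ℕ → S → (∀ i, A i) → S → ℝ) (τ : ∀ i : Fin m, ℕ → S → A i) :
    ℕ → ℕ → S → S → ℝ
  | 0, _, s, s' => if s' = s then 1 else 0
  | n + 1, h, s, s' => ∑ t, P h s (tgtJ τ h s) t * reach P τ n (h + 1) t s'

/-- Expected sum of a state-dependent function along the Markov chain `Ps`. -/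
noncomputable def SSum (Ps : ℕ → S → S → ℝ) (f : ℕ → S → ℝ) : ℕ → ℕ → S → ℝ
  | 0, _, _ => 0
  | n + 1, h, s => f h s + ∑ s', Ps h s s' * SSum Ps f n (h + 1) s'

end MGAttack

namespace MGAttack

section Aux

variable {S : Type} [Fintype S] [DecidableEq S]
variable {m : ℕ} {A : Fin m → Type} [∀ i, Fintype (A i)] [∀ i, DecidableEq (A i)]

lemma jp_det_eq (τ : ∀ i : Fin m, ℕ → S → A i) (h : ℕ) (s : S) (a : ∀ i, A i) :
    jp (detP τ) h s a = if a = tgtJ τ h s then 1 else 0 := by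
  by_cases hc : a = tgtJ τ h s
  · subst hc; simp [jp, detP, tgtJ]
  · simp only [hc, if_false]
    obtain ⟨i, hi⟩ : ∃ i, a i ≠ τ i h s := by
      by_contra hno
      push_neg at hno
      exact hc (funext hno)
    exact Finset.prod_eq_zero (Finset.mem_univ i) (by simp [detP, hi])

lemma sum_det (τ : ∀ i : Fin m, ℕ → S → A i) (h : ℕ) (s : S) (g : (∀ i, A i) → ℝ) :
    ∑ a, jp (detP τ) h s a * g a = g (tgtJ τ h s) := by
  simp [jp_det_eq, ite_mul]

lemma VA_det_succ (P : ℕ → S → (∀ i, A i) → S → ℝ) (f : ℕ → S → (∀ i, A i) → ℝ)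
    (τ : ∀ i : Fin m, ℕ → S → A i) (n h : ℕ) (s : S) :
    VA P f (jp (detP τ)) (n + 1) h s
      = f h s (tgtJ τ h s)
        + ∑ s', P h s (tgtJ τ h s) s' * VA P f (jp (detP τ)) n (h + 1) s' := by
  rw [show VA P f (jp (detP τ)) (n + 1) h s
      = ∑ a, jp (detP τ) h s a
          * (f h s a + ∑ s', P h s a s' * VA P f (jp (detP τ)) n (h + 1) s') from rfl]
  exact sum_det τ h s _

lemma VA_det_bounds {H : ℕ} {P : ℕ → S → (∀ i, A i) → S → ℝ} (hP : IsKernel H P)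
    {f : ℕ → S → (∀ i, A i) → ℝ}
    (hf : ∀ h ∈ Finset.Icc 1 H, ∀ s a, f h s a ∈ Set.Icc (0 : ℝ) 1)
    (τ : ∀ i : Fin m, ℕ → S → A i) :
    ∀ n h, 1 ≤ h → n + h ≤ H + 1 → ∀ s,
      VA P f (jp (detP τ)) n h s ∈ Set.Icc (0 : ℝ) n := by
  intro n
  induction n with
  | zero => intro h _ _ s; simp [VA]
  | succ n ih =>
    intro h h1 hle s
    have hmem : h ∈ Finset.Icc 1 H := Finset.mem_Icc.mpr ⟨h1, by omega⟩
    obtain ⟨hPn, hPs⟩ := hP h hmem s (tgtJ τ h s)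
    have hf0 := hf h hmem s (tgtJ τ h s)
    simp only [Set.mem_Icc] at hf0 ⊢
    rw [VA_det_succ]
    constructor
    · have hnn : 0 ≤ ∑ s', P h s (tgtJ τ h s) s' * VA P f (jp (detP τ)) n (h + 1) s' :=
        Finset.sum_nonneg fun s' _ => mul_nonneg (hPn s')
          ((Set.mem_Icc.mp (ih (h + 1) (by omega) (by omega) s')).1)
      linarith [hf0.1]
    · have h2 : ∑ s', P h s (tgtJ τ h s) s' * VA P f (jp (detP τ)) n (h + 1) s'
          ≤ ∑ s', P h s (tgtJ τ h s) s' * (n : ℝ) :=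
        Finset.sum_le_sum fun s' _ => mul_le_mul_of_nonneg_left
          ((Set.mem_Icc.mp (ih (h + 1) (by omega) (by omega) s')).2) (hPn s')
      have h3 : ∑ s', P h s (tgtJ τ h s) s' * (n : ℝ) = n := by
        rw [← Finset.sum_mul, hPs, one_mul]
      push_cast
      linarith [hf0.2]

lemma sum_jp (π : ∀ i : Fin m, ℕ → S → A i → ℝ) (h : ℕ) (s : S) :
    ∑ a, jp π h s a = ∏ i, ∑ b, π i h s b := by
  rw [Finset.prod_univ_sum]
  simp [jp]

lemma main_diff {H : ℕ} {P : ℕ → S → (∀ i, A i) → S → ℝ} (hP : IsKernel H P)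
    {Rd : ℕ → S → (∀ i, A i) → ℝ}
    (hRd : ∀ h ∈ Finset.Icc 1 H, ∀ s : S, ∀ a : ∀ j, A j, Rd h s a ∈ Set.Icc (0 : ℝ) 1)
    (τ : ∀ i : Fin m, ℕ → S → A i)
    {π : ∀ j : Fin m, ℕ → S → A j → ℝ} (hπ : IsPolicy H π) :
    ∀ n h, 1 ≤ h → n + h ≤ H + 1 → ∀ s,
      VA P Rd (jp (detP τ)) n h s - VA P Rd (jp π) n h s
        ≤ H * VA P (fun h s a => ∑ j : Fin m, (if a j = τ j h s then (0 : ℝ) else 1))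
            (jp π) n h s := by
  set f : ℕ → S → (∀ i, A i) → ℝ :=
    fun h s a => ∑ j : Fin m, (if a j = τ j h s then (0 : ℝ) else 1) with hfdef
  intro n
  induction n with
  | zero => intro h _ _ s; simp [VA]
  | succ n ih =>
    intro h h1 hle s
    have hmem : h ∈ Finset.Icc 1 H := Finset.mem_Icc.mpr ⟨h1, by omega⟩
    have hπn : ∀ a : ∀ i, A i, 0 ≤ jp π h s a := fun a =>
      Finset.prod_nonneg fun i _ => (hπ i h hmem s).1 (a i)
    have hπ1 : ∑ a, jp π h s a = 1 := by
      rw [sum_jp]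
      exact Finset.prod_eq_one fun i _ => (hπ i h hmem s).2
    have key : ∀ a : ∀ i, A i,
        (Rd h s (tgtJ τ h s)
            + ∑ s', P h s (tgtJ τ h s) s' * VA P Rd (jp (detP τ)) n (h + 1) s')
          - (Rd h s a + ∑ s', P h s a s' * VA P Rd (jp π) n (h + 1) s')
        ≤ H * (f h s a + ∑ s', P h s a s' * VA P f (jp π) n (h + 1) s') := by
      intro a
      obtain ⟨hPan, hPas⟩ := hP h hmem s a
      obtain ⟨hPtn, hPts⟩ := hP h hmem s (tgtJ τ h s)
      have hrec : ∑ s', P h s a s' * VA P Rd (jp (detP τ)) n (h + 1) s'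
            - ∑ s', P h s a s' * VA P Rd (jp π) n (h + 1) s'
          ≤ H * ∑ s', P h s a s' * VA P f (jp π) n (h + 1) s' := by
        rw [← Finset.sum_sub_distrib, Finset.mul_sum]
        refine Finset.sum_le_sum fun s' _ => ?_
        rw [← mul_sub]
        calc P h s a s' * (VA P Rd (jp (detP τ)) n (h + 1) s'
                - VA P Rd (jp π) n (h + 1) s')
            ≤ P h s a s' * (H * VA P f (jp π) n (h + 1) s') :=
              mul_le_mul_of_nonneg_left (ih (h + 1) (by omega) (by omega) s') (hPan s')
          _ = H * (P h s a s' * VA P f (jp π) n (h + 1) s') := by ring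
      by_cases hc : a = tgtJ τ h s
      · subst hc
        have hf0 : f h s (tgtJ τ h s) = 0 := by simp [hfdef, tgtJ]
        rw [hf0]
        have : ∑ s', P h s (tgtJ τ h s) s' * VA P Rd (jp (detP τ)) n (h + 1) s'
              - ∑ s', P h s (tgtJ τ h s) s' * VA P Rd (jp π) n (h + 1) s'
            ≤ H * ∑ s', P h s (tgtJ τ h s) s' * VA P f (jp π) n (h + 1) s' := hrec
        linarith
      · have hfa : (1 : ℝ) ≤ f h s a := by
          obtain ⟨j, hj⟩ : ∃ j, a j ≠ τ j h s := by
            by_contra hno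
            push_neg at hno
            exact hc (funext hno)
          calc (1 : ℝ) = if a j = τ j h s then 0 else 1 := by simp [hj]
            _ ≤ f h s a := Finset.single_le_sum
                (f := fun j => if a j = τ j h s then (0 : ℝ) else 1)
                (fun j _ => by split <;> norm_num) (Finset.mem_univ j)
        have hb := VA_det_bounds hP hRd τ
        have hVt : ∑ s', P h s (tgtJ τ h s) s' * VA P Rd (jp (detP τ)) n (h + 1) s'
            ≤ (n : ℝ) := by
          have h2 : ∑ s', P h s (tgtJ τ h s) s' * VA P Rd (jp (detP τ)) n (h + 1) s'
              ≤ ∑ s', P h s (tgtJ τ h s) s' * (n : ℝ) :=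
            Finset.sum_le_sum fun s' _ => mul_le_mul_of_nonneg_left
              ((Set.mem_Icc.mp (hb n (h + 1) (by omega) (by omega) s')).2) (hPtn s')
          rw [← Finset.sum_mul, hPts, one_mul] at h2
          exact h2
        have hVa : 0 ≤ ∑ s', P h s a s' * VA P Rd (jp (detP τ)) n (h + 1) s' :=
          Finset.sum_nonneg fun s' _ => mul_nonneg (hPan s')
            ((Set.mem_Icc.mp (hb n (h + 1) (by omega) (by omega) s')).1)
        have hR1 : Rd h s (tgtJ τ h s) ≤ 1 := (Set.mem_Icc.mp (hRd h hmem s _)).2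
        have hR0 : 0 ≤ Rd h s a := (Set.mem_Icc.mp (hRd h hmem s a)).1
        have hnH : (n : ℝ) + 1 ≤ H := by
          have : n + 1 ≤ H := by omega
          exact_mod_cast this
        have hHfa : (H : ℝ) ≤ H * f h s a := by
          calc (H : ℝ) = H * 1 := by ring
            _ ≤ H * f h s a := mul_le_mul_of_nonneg_left hfa (by positivity)
        rw [mul_add]
        linarith
    have hexp : ∀ (g : ℕ → S → (∀ i, A i) → ℝ),
        VA P g (jp π) (n + 1) h s
          = ∑ a, jp π h s a * (g h s a + ∑ s', P h s a s' * VA P g (jp π) n (h + 1) s') :=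
      fun g => rfl
    rw [hexp Rd, hexp f, VA_det_succ]
    set B : ℝ := Rd h s (tgtJ τ h s)
      + ∑ s', P h s (tgtJ τ h s) s' * VA P Rd (jp (detP τ)) n (h + 1) s' with hB
    calc B - ∑ a, jp π h s a
            * (Rd h s a + ∑ s', P h s a s' * VA P Rd (jp π) n (h + 1) s')
        = ∑ a, jp π h s a
            * (B - (Rd h s a + ∑ s', P h s a s' * VA P Rd (jp π) n (h + 1) s')) := by
          simp only [mul_sub, Finset.sum_sub_distrib, ← Finset.sum_mul, hπ1, one_mul]
      _ ≤ ∑ a, jp π h s a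
            * (H * (f h s a + ∑ s', P h s a s' * VA P f (jp π) n (h + 1) s')) := by
          refine Finset.sum_le_sum fun a _ => ?_
          exact mul_le_mul_of_nonneg_left (key a) (hπn a)
      _ = H * ∑ a, jp π h s a
            * (f h s a + ∑ s', P h s a s' * VA P f (jp π) n (h + 1) s') := by
          rw [Finset.mul_sum]
          exact Finset.sum_congr rfl fun a _ => by ring

end Aux

/-- For the attacker's reward function `Rd` with values in `[0,1]`, the value gap between
any deterministic product policy `π*` and any Markov product policy `π` is at most `H`
times the expected number of agent-steps on which `π` deviates from `π*`; in particular
`Loss2(K,H) ≤ H · Loss1(K,H)`. -/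
theorem stmt18 {S : Type} [Fintype S] [DecidableEq S]
    {m : ℕ} {A : Fin m → Type} [∀ i, Fintype (A i)] [∀ i, DecidableEq (A i)]
    (H : ℕ) (hH : 1 ≤ H) (hm : 1 ≤ m)
    (P : ℕ → S → (∀ i, A i) → S → ℝ) (hP : IsKernel H P)
    (Rd : ℕ → S → (∀ i, A i) → ℝ)
    (hRd : ∀ h ∈ Finset.Icc 1 H, ∀ s : S, ∀ a : ∀ j, A j, Rd h s a ∈ Set.Icc (0 : ℝ) 1)
    (τ : ∀ i : Fin m, ℕ → S → A i)
    (π : ∀ j : Fin m, ℕ → S → A j → ℝ) (hπ : IsPolicy H π) (s₁ : S) :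
    Vf P Rd (jp (detP τ)) H 1 s₁ - Vf P Rd (jp π) H 1 s₁
      ≤ H * VA P (fun h s a => ∑ j : Fin m, (if a j = τ j h s then (0 : ℝ) else 1))
          (jp π) H 1 s₁ := by
  have := main_diff hP hRd τ hπ H 1 le_rfl (by omega) s₁
  simpa [Vf] using this

end MGAttack
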